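/- Let ρ be a state and σ a positive definite matrix on ℂ^d, and let 0 < η < ε < 1. Then D_H^{ε−η}(ρ‖σ) + log η ≤ D̄_s^{1−ε}(ρ‖σ) ≤ D_H^ε(ρ‖σ). -/

import Mathlib

open Matrix
open scoped ComplexOrder

noncomputable section

/-- Positive part `C₊` of a Hermitian matrix, obtained by applying `x ↦ max x 0` to the
eigenvalues in a spectral decomposition (junk value `0` for non-Hermitian input). -/
def matPos {n : Type*} [Fintype n] [DecidableEq n] (A : Matrix n n ℂ) : Matrix n n ℂ :=
  if hA : A.IsHermitian then
    (hA.eigenvectorUnitary : Matrix n n ℂ) *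
      Matrix.diagonal (fun i => ((max (hA.eigenvalues i) 0 : ℝ) : ℂ)) *
      star (hA.eigenvectorUnitary : Matrix n n ℂ)
  else 0

/-- `Tr C₊` as a real number. -/
def trPos {n : Type*} [Fintype n] [DecidableEq n] (A : Matrix n n ℂ) : ℝ :=
  (matPos A).trace.re

/-- Spectral projection of a Hermitian matrix onto `[0, ∞)` (junk value `0` for
non-Hermitian input). -/
def projNonneg {n : Type*} [Fintype n] [DecidableEq n] (A : Matrix n n ℂ) : Matrix n n ℂ :=
  if hA : A.IsHermitian then
    (hA.eigenvectorUnitary : Matrix n n ℂ) *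
      Matrix.diagonal (fun i => if 0 ≤ hA.eigenvalues i then (1 : ℂ) else 0) *
      star (hA.eigenvectorUnitary : Matrix n n ℂ)
  else 0

/-- The information spectrum relative entropy `D̲_s^ε(ρ‖σ)`. -/
def Dlow {n : Type*} [Fintype n] [DecidableEq n] (ε : ℝ) (ρ σ : Matrix n n ℂ) : ℝ :=
  sSup {γ : ℝ | 1 - ε ≤ trPos (ρ - (2 : ℝ) ^ γ • σ)}

/-- The information spectrum relative entropy `D̄_s^ε(ρ‖σ)`. -/
def Dhigh {n : Type*} [Fintype n] [DecidableEq n] (ε : ℝ) (ρ σ : Matrix n n ℂ) : ℝ :=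
  sInf {γ : ℝ | trPos (ρ - (2 : ℝ) ^ γ • σ) ≤ ε}

/-- The hypothesis testing relative entropy
`D_H^ε(ρ‖σ) = −log inf{Tr(Qσ) : 0 ≤ Q ≤ 1, Tr(Qρ) ≥ 1 − ε}` (logarithm to base 2). -/
def DH {n : Type*} [Fintype n] [DecidableEq n] (ε : ℝ) (ρ σ : Matrix n n ℂ) : ℝ :=
  - Real.logb 2 (sInf {r : ℝ | ∃ Q : Matrix n n ℂ, Q.PosSemidef ∧
      ((1 : Matrix n n ℂ) - Q).PosSemidef ∧ 1 - ε ≤ (Q * ρ).trace.re ∧ r = (Q * σ).trace.re})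

set_option linter.unusedSectionVars false

section Helpers

variable {n : Type*} [Fintype n] [DecidableEq n]

lemma trace_conj_diag (U : Matrix.unitaryGroup n ℂ) (g : n → ℂ) :
    ((U : Matrix n n ℂ) * diagonal g * star (U : Matrix n n ℂ)).trace = ∑ i, g i := by
  rw [Matrix.trace_mul_cycle, (Matrix.mem_unitaryGroup_iff').mp U.2, Matrix.one_mul,
    Matrix.trace_diagonal]

lemma conj_diag_mul_conj_diag (U : Matrix.unitaryGroup n ℂ) (g h : n → ℂ) :
    ((U : Matrix n n ℂ) * diagonal g * star (U : Matrix n n ℂ)) *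
      ((U : Matrix n n ℂ) * diagonal h * star (U : Matrix n n ℂ))
    = (U : Matrix n n ℂ) * diagonal (fun i => g i * h i) * star (U : Matrix n n ℂ) := by
  have h1 : star (U : Matrix n n ℂ) * (U : Matrix n n ℂ) = 1 :=
    (Matrix.mem_unitaryGroup_iff').mp U.2
  calc ((U : Matrix n n ℂ) * diagonal g * star (U : Matrix n n ℂ)) *
      ((U : Matrix n n ℂ) * diagonal h * star (U : Matrix n n ℂ))
      = (U : Matrix n n ℂ) * diagonal g * (star (U : Matrix n n ℂ) * (U : Matrix n n ℂ)) *
        diagonal h * star (U : Matrix n n ℂ) := by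
        simp only [Matrix.mul_assoc]
    _ = (U : Matrix n n ℂ) * (diagonal g * diagonal h) * star (U : Matrix n n ℂ) := by
        rw [h1]; simp only [Matrix.mul_one, Matrix.mul_assoc]
    _ = _ := by rw [Matrix.diagonal_mul_diagonal]

lemma conj_diag_posSemidef (U : Matrix.unitaryGroup n ℂ) {g : n → ℝ} (hg : ∀ i, 0 ≤ g i) :
    ((U : Matrix n n ℂ) * diagonal (fun i => (g i : ℂ)) * star (U : Matrix n n ℂ)).PosSemidef := by
  have : (diagonal (fun i => (g i : ℂ))).PosSemidef :=
    Matrix.posSemidef_diagonal_iff.mpr fun i => by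
      simpa using (hg i)
  simpa [Matrix.star_eq_conjTranspose] using this.mul_mul_conjTranspose_same (U : Matrix n n ℂ)

lemma posSemidef_trace_nonneg {M : Matrix n n ℂ} (hM : M.PosSemidef) : 0 ≤ M.trace := by
  rw [Matrix.trace]
  refine Finset.sum_nonneg fun i _ => ?_
  exact hM.diag_nonneg

open scoped MatrixOrder in
lemma trace_mul_psd_nonneg {A B : Matrix n n ℂ} (hA : A.PosSemidef) (hB : B.PosSemidef) :
    0 ≤ (A * B).trace.re := by
  have h1 : A * B = CFC.sqrt A * (CFC.sqrt A * B) := by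
    rw [← Matrix.mul_assoc, CFC.sqrt_mul_sqrt_self A hA.nonneg]
  have h2 : (A * B).trace = (CFC.sqrt A * B * CFC.sqrt A).trace := by
    rw [h1, Matrix.trace_mul_comm, Matrix.mul_assoc]
  have h3 : (CFC.sqrt A * B * CFC.sqrt A).PosSemidef := by
    nth_rewrite 2 [← (CFC.sqrt_nonneg A).posSemidef.isHermitian.eq]
    exact hB.mul_mul_conjTranspose_same _
  have := posSemidef_trace_nonneg h3
  rw [h2]
  exact (Complex.le_def.mp this).1
variable {n : Type*} [Fintype n] [DecidableEq n]

lemma conj_diag_sub (U : Matrix.unitaryGroup n ℂ) (g h : n → ℂ) :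
    (U : Matrix n n ℂ) * diagonal g * star (U : Matrix n n ℂ) -
      (U : Matrix n n ℂ) * diagonal h * star (U : Matrix n n ℂ)
    = (U : Matrix n n ℂ) * diagonal (fun i => g i - h i) * star (U : Matrix n n ℂ) := by
  rw [← Matrix.sub_mul, ← Matrix.mul_sub, Matrix.diagonal_sub]

lemma one_eq_conj (U : Matrix.unitaryGroup n ℂ) :
    (1 : Matrix n n ℂ)
      = (U : Matrix n n ℂ) * diagonal (fun _ => (1:ℂ)) * star (U : Matrix n n ℂ) := by
  have : diagonal (fun _ : n => (1:ℂ)) = 1 := Matrix.diagonal_one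
  rw [this, Matrix.mul_one, (Matrix.mem_unitaryGroup_iff).mp U.2]

lemma smul_conj (U : Matrix.unitaryGroup n ℂ) (r : ℝ) (g : n → ℂ) :
    r • ((U : Matrix n n ℂ) * diagonal g * star (U : Matrix n n ℂ))
      = (U : Matrix n n ℂ) * diagonal (fun i => (r:ℂ) * g i) * star (U : Matrix n n ℂ) := by
  rw [← Matrix.smul_mul, ← Matrix.mul_smul]
  congr 2
  rw [← Matrix.diagonal_smul]
  congr 1

variable {A : Matrix n n ℂ}

lemma spectral (hA : A.IsHermitian) :
    A = (hA.eigenvectorUnitary : Matrix n n ℂ) *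
      diagonal (fun i => ((hA.eigenvalues i : ℝ) : ℂ)) *
      star (hA.eigenvectorUnitary : Matrix n n ℂ) :=
  hA.spectral_theorem

lemma matPos_eq (hA : A.IsHermitian) :
    matPos A = (hA.eigenvectorUnitary : Matrix n n ℂ) *
      diagonal (fun i => ((max (hA.eigenvalues i) 0 : ℝ) : ℂ)) *
      star (hA.eigenvectorUnitary : Matrix n n ℂ) := dif_pos hA

lemma projNonneg_eq (hA : A.IsHermitian) :
    projNonneg A = (hA.eigenvectorUnitary : Matrix n n ℂ) *
      diagonal (fun i => if 0 ≤ hA.eigenvalues i then (1 : ℂ) else 0) *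
      star (hA.eigenvectorUnitary : Matrix n n ℂ) := dif_pos hA

lemma trPos_eq_sum (hA : A.IsHermitian) :
    trPos A = ∑ i, max (hA.eigenvalues i) 0 := by
  rw [trPos, matPos_eq hA, trace_conj_diag]
  rw [← Complex.ofReal_sum]
  exact Complex.ofReal_re _

lemma matPos_posSemidef (hA : A.IsHermitian) : (matPos A).PosSemidef := by
  rw [matPos_eq hA]
  exact conj_diag_posSemidef _ fun i => le_max_right _ _

lemma matPos_sub_posSemidef (hA : A.IsHermitian) : (matPos A - A).PosSemidef := by
  have key : ((hA.eigenvectorUnitary : Matrix n n ℂ) *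
      diagonal (fun i => ((max (hA.eigenvalues i) 0 : ℝ) : ℂ)) *
      star (hA.eigenvectorUnitary : Matrix n n ℂ) -
      (hA.eigenvectorUnitary : Matrix n n ℂ) *
      diagonal (fun i => ((hA.eigenvalues i : ℝ) : ℂ)) *
      star (hA.eigenvectorUnitary : Matrix n n ℂ)).PosSemidef := by
    rw [conj_diag_sub]
    have : (fun i => ((max (hA.eigenvalues i) 0 : ℝ) : ℂ) - ((hA.eigenvalues i : ℝ) : ℂ))
        = fun i => ((max (hA.eigenvalues i) 0 - hA.eigenvalues i : ℝ) : ℂ) := by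
      funext i; push_cast; ring
    rw [this]
    exact conj_diag_posSemidef _ fun i => by simp [le_max_left]
  rw [← spectral hA] at key
  rw [matPos_eq hA]
  exact key

lemma projNonneg_posSemidef (hA : A.IsHermitian) : (projNonneg A).PosSemidef := by
  rw [projNonneg_eq hA]
  have : (fun i => if 0 ≤ hA.eigenvalues i then (1:ℂ) else 0)
      = fun i => (((if 0 ≤ hA.eigenvalues i then (1:ℝ) else 0) : ℝ) : ℂ) := by
    funext i; split_ifs <;> simp
  rw [this]
  exact conj_diag_posSemidef _ fun i => by split_ifs <;> norm_num

lemma one_sub_projNonneg_posSemidef (hA : A.IsHermitian) :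
    ((1 : Matrix n n ℂ) - projNonneg A).PosSemidef := by
  rw [projNonneg_eq hA, one_eq_conj hA.eigenvectorUnitary, conj_diag_sub]
  have : (fun i => (1:ℂ) - if 0 ≤ hA.eigenvalues i then (1:ℂ) else 0)
      = fun i => (((if 0 ≤ hA.eigenvalues i then (0:ℝ) else 1) : ℝ) : ℂ) := by
    funext i; split_ifs <;> simp
  rw [this]
  exact conj_diag_posSemidef _ fun i => by split_ifs <;> norm_num

lemma trace_projNonneg_mul (hA : A.IsHermitian) :
    ((projNonneg A) * A).trace.re = trPos A := by
  have key : (((hA.eigenvectorUnitary : Matrix n n ℂ) *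
      diagonal (fun i => if 0 ≤ hA.eigenvalues i then (1 : ℂ) else 0) *
      star (hA.eigenvectorUnitary : Matrix n n ℂ)) *
      ((hA.eigenvectorUnitary : Matrix n n ℂ) *
      diagonal (fun i => ((hA.eigenvalues i : ℝ) : ℂ)) *
      star (hA.eigenvectorUnitary : Matrix n n ℂ))).trace.re = trPos A := by
    rw [conj_diag_mul_conj_diag, trace_conj_diag, trPos_eq_sum hA]
    have : (fun i => (if 0 ≤ hA.eigenvalues i then (1:ℂ) else 0) * ((hA.eigenvalues i : ℝ) : ℂ))
        = fun i => ((max (hA.eigenvalues i) 0 : ℝ) : ℂ) := by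
      funext i
      rcases le_or_gt 0 (hA.eigenvalues i) with h | h
      · simp [h, max_eq_left h]
      · simp [not_le.mpr h, (max_eq_right h.le)]
    rw [this, ← Complex.ofReal_sum, Complex.ofReal_re]
  rw [← spectral hA] at key
  rw [projNonneg_eq hA]
  exact key

lemma trace_mul_sub_re (Q X Y : Matrix n n ℂ) :
    (Q * (X - Y)).trace.re = (Q * X).trace.re - (Q * Y).trace.re := by
  rw [Matrix.mul_sub, Matrix.trace_sub, Complex.sub_re]

lemma trace_mul_smul_re (Q X : Matrix n n ℂ) (r : ℝ) :
    (Q * (r • X)).trace.re = r * (Q * X).trace.re := by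
  rw [Matrix.mul_smul, Matrix.trace_smul, Complex.smul_re, smul_eq_mul]

/-- Key inequality : for `0 ≤ Q ≤ 1` and Hermitian `A`, `Tr(QA) ≤ Tr A₊`. -/
lemma trace_mul_le_trPos {Q : Matrix n n ℂ} (hQ : Q.PosSemidef)
    (hQ1 : ((1 : Matrix n n ℂ) - Q).PosSemidef) (hA : A.IsHermitian) :
    (Q * A).trace.re ≤ trPos A := by
  have h1 : 0 ≤ (Q * (matPos A - A)).trace.re :=
    trace_mul_psd_nonneg hQ (matPos_sub_posSemidef hA)
  have h2 : 0 ≤ (((1 : Matrix n n ℂ) - Q) * matPos A).trace.re :=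
    trace_mul_psd_nonneg hQ1 (matPos_posSemidef hA)
  rw [trace_mul_sub_re] at h1
  rw [Matrix.sub_mul, Matrix.trace_sub, Complex.sub_re, Matrix.one_mul] at h2
  have : trPos A = (matPos A).trace.re := rfl
  linarith

/-- A PSD matrix with trace one is `≤ 1`. -/
lemma one_sub_posSemidef {ρ : Matrix n n ℂ} (hρ : ρ.PosSemidef) (hρtr : ρ.trace = 1) :
    ((1 : Matrix n n ℂ) - ρ).PosSemidef := by
  have hsum : ∑ i, hρ.1.eigenvalues i = 1 := by
    have : ρ.trace = ∑ i, ((hρ.1.eigenvalues i : ℝ) : ℂ) := by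
      nth_rewrite 1 [spectral hρ.1]
      rw [trace_conj_diag]
    rw [hρtr] at this
    have := congrArg Complex.re this.symm
    simpa [← Complex.ofReal_sum] using this
  have hle : ∀ i, hρ.1.eigenvalues i ≤ 1 := by
    intro i
    rw [← hsum]
    exact Finset.single_le_sum (fun j _ => hρ.eigenvalues_nonneg j) (Finset.mem_univ i)
  have key : ((1 : Matrix n n ℂ) -
      (hρ.1.eigenvectorUnitary : Matrix n n ℂ) *
        diagonal (fun i => ((hρ.1.eigenvalues i : ℝ) : ℂ)) *
        star (hρ.1.eigenvectorUnitary : Matrix n n ℂ)).PosSemidef := by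
    rw [one_eq_conj hρ.1.eigenvectorUnitary, conj_diag_sub]
    have : (fun i => (1 : ℂ) - ((hρ.1.eigenvalues i : ℝ) : ℂ))
        = fun i => ((1 - hρ.1.eigenvalues i : ℝ) : ℂ) := by
      funext i; push_cast; ring
    rw [this]
    exact conj_diag_posSemidef _ fun i => by linarith [hle i]
  rwa [← spectral hρ.1] at key

/-- A positive definite matrix dominates a positive multiple of the identity. -/
lemma posDef_sub_smul_one [Nonempty n] {σ : Matrix n n ℂ} (hσ : σ.PosDef) :
    ∃ c : ℝ, 0 < c ∧ (σ - c • (1 : Matrix n n ℂ)).PosSemidef := by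
  obtain ⟨i₀, -, hmin⟩ := Finset.exists_min_image Finset.univ hσ.1.eigenvalues
    ⟨Classical.arbitrary n, Finset.mem_univ _⟩
  refine ⟨hσ.1.eigenvalues i₀, hσ.eigenvalues_pos i₀, ?_⟩
  set c := hσ.1.eigenvalues i₀ with hc
  have key : ((hσ.1.eigenvectorUnitary : Matrix n n ℂ) *
        diagonal (fun i => ((hσ.1.eigenvalues i : ℝ) : ℂ)) *
        star (hσ.1.eigenvectorUnitary : Matrix n n ℂ)
      - c • (1 : Matrix n n ℂ)).PosSemidef := by
    rw [one_eq_conj hσ.1.eigenvectorUnitary, smul_conj, conj_diag_sub]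
    have : (fun i => ((hσ.1.eigenvalues i : ℝ) : ℂ) - (c : ℂ) * 1)
        = fun i => ((hσ.1.eigenvalues i - c : ℝ) : ℂ) := by
      funext i; push_cast; ring
    rw [this]
    exact conj_diag_posSemidef _ fun i => by
      have := hmin i (Finset.mem_univ i); linarith
  rwa [← spectral hσ.1] at key

lemma isHermitian_real_smul {M : Matrix n n ℂ} (hM : M.IsHermitian) (r : ℝ) :
    (r • M).IsHermitian := by
  unfold Matrix.IsHermitian
  rw [Matrix.conjTranspose_smul, star_trivial, hM.eq]

lemma posSemidef_real_smul {M : Matrix n n ℂ} (hM : M.PosSemidef) {r : ℝ} (hr : 0 ≤ r) :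
    (r • M).PosSemidef := by
  exact hM.smul hr


end Helpers

/-- Equivalence of `D̄_s` with the hypothesis testing relative entropy:
`D_H^{ε−η}(ρ‖σ) + log η ≤ D̄_s^{1−ε}(ρ‖σ) ≤ D_H^ε(ρ‖σ)` for `0 < η < ε < 1`. -/
theorem Dhigh_DH_bounds {d : ℕ} (ρ σ : Matrix (Fin d) (Fin d) ℂ)
    (hρ : ρ.PosSemidef) (hρtr : ρ.trace = 1) (hσ : σ.PosDef)
    (ε η : ℝ) (hη0 : 0 < η) (hηε : η < ε) (hε1 : ε < 1) :
    DH (ε - η) ρ σ + Real.logb 2 η ≤ Dhigh (1 - ε) ρ σ ∧ Dhigh (1 - ε) ρ σ ≤ DH ε ρ σ := by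
  have hd : Nonempty (Fin d) := by
    rcases Nat.eq_zero_or_pos d with h | h
    · subst h
      exact absurd hρtr (by simp [Matrix.trace])
    · exact ⟨⟨0, h⟩⟩
  obtain ⟨c, hc0, hcσ⟩ := posDef_sub_smul_one hσ
  have h1ρ := one_sub_posSemidef hρ hρtr
  have h2γ : ∀ γ : ℝ, (0:ℝ) < (2:ℝ) ^ γ := fun γ => Real.rpow_pos_of_pos two_pos γ
  have hHerm : ∀ γ : ℝ, (ρ - (2:ℝ)^γ • σ).IsHermitian := fun γ =>
    hρ.1.sub (isHermitian_real_smul hσ.1 _)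
  -- the sets involved
  set S : Set ℝ := {γ : ℝ | trPos (ρ - (2:ℝ)^γ • σ) ≤ 1 - ε} with hSdef
  set T1 : Set ℝ := {r : ℝ | ∃ Q : Matrix (Fin d) (Fin d) ℂ, Q.PosSemidef ∧
      ((1 : Matrix (Fin d) (Fin d) ℂ) - Q).PosSemidef ∧ 1 - (ε - η) ≤ (Q * ρ).trace.re ∧
      r = (Q * σ).trace.re} with hT1def
  set T2 : Set ℝ := {r : ℝ | ∃ Q : Matrix (Fin d) (Fin d) ℂ, Q.PosSemidef ∧
      ((1 : Matrix (Fin d) (Fin d) ℂ) - Q).PosSemidef ∧ 1 - ε ≤ (Q * ρ).trace.re ∧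
      r = (Q * σ).trace.re} with hT2def
  have hDhigh : Dhigh (1 - ε) ρ σ = sInf S := rfl
  have hDH1 : DH (ε - η) ρ σ = - Real.logb 2 (sInf T1) := rfl
  have hDH2 : DH ε ρ σ = - Real.logb 2 (sInf T2) := rfl
  have hρre : ρ.trace.re = 1 := by rw [hρtr]; exact Complex.one_re
  -- key general inequalities
  have key_lb : ∀ Q : Matrix (Fin d) (Fin d) ℂ, Q.PosSemidef →
      ((1 : Matrix (Fin d) (Fin d) ℂ) - Q).PosSemidef →
      ∀ t : ℝ, t ≤ (Q * ρ).trace.re → c * t ≤ (Q * σ).trace.re := by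
    intro Q hQ hQ1 t ht
    have h1 : 0 ≤ (Q * (σ - c • (1 : Matrix (Fin d) (Fin d) ℂ))).trace.re :=
      trace_mul_psd_nonneg hQ hcσ
    rw [trace_mul_sub_re, trace_mul_smul_re, Matrix.mul_one] at h1
    have h2 : 0 ≤ (Q * ((1 : Matrix (Fin d) (Fin d) ℂ) - ρ)).trace.re :=
      trace_mul_psd_nonneg hQ h1ρ
    rw [trace_mul_sub_re, Matrix.mul_one] at h2
    have e1 : c * t ≤ c * (Q * ρ).trace.re := mul_le_mul_of_nonneg_left ht hc0.le
    have e2 : c * (Q * ρ).trace.re ≤ c * Q.trace.re :=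
      mul_le_mul_of_nonneg_left (by linarith) hc0.le
    linarith
  have key_ub : ∀ Q : Matrix (Fin d) (Fin d) ℂ, Q.PosSemidef →
      ((1 : Matrix (Fin d) (Fin d) ℂ) - Q).PosSemidef → ∀ γ : ℝ,
      (Q * ρ).trace.re - (2:ℝ)^γ * (Q * σ).trace.re ≤ trPos (ρ - (2:ℝ)^γ • σ) := by
    intro Q hQ hQ1 γ
    have h := trace_mul_le_trPos hQ hQ1 (hHerm γ)
    rwa [trace_mul_sub_re, trace_mul_smul_re] at h
  -- 1 is always a feasible test
  have hone_mem : ∀ ε' : ℝ, 0 ≤ ε' → ((1 : Matrix (Fin d) (Fin d) ℂ) * σ).trace.re ∈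
      {r : ℝ | ∃ Q : Matrix (Fin d) (Fin d) ℂ, Q.PosSemidef ∧
        ((1 : Matrix (Fin d) (Fin d) ℂ) - Q).PosSemidef ∧ 1 - ε' ≤ (Q * ρ).trace.re ∧
        r = (Q * σ).trace.re} := by
    intro ε' hε'
    refine ⟨1, Matrix.PosSemidef.one, by rw [sub_self]; exact Matrix.PosSemidef.zero, ?_, rfl⟩
    rw [Matrix.one_mul, hρre]
    linarith
  -- S is nonempty
  have hSne : S.Nonempty := by
    refine ⟨Real.logb 2 (1/c), ?_⟩
    set γ₀ := Real.logb 2 (1/c) with hγ₀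
    have h2c : (2:ℝ) ^ γ₀ = 1/c := Real.rpow_logb two_pos (by norm_num) (by positivity)
    have hone : (2:ℝ)^γ₀ • (c • (1 : Matrix (Fin d) (Fin d) ℂ)) = 1 := by
      rw [smul_smul, h2c, one_div, inv_mul_cancel₀ (ne_of_gt hc0), one_smul]
    have hneg : (-(ρ - (2:ℝ)^γ₀ • σ)).PosSemidef := by
      have hsum : ((2:ℝ)^γ₀ • σ - 1) + (1 - ρ) = -(ρ - (2:ℝ)^γ₀ • σ) := by abel
      rw [← hsum]
      refine Matrix.PosSemidef.add ?_ h1ρ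
      rw [← hone, ← smul_sub]
      exact posSemidef_real_smul hcσ (h2γ γ₀).le
    have hP := projNonneg_posSemidef (hHerm γ₀)
    have h := trace_mul_psd_nonneg hP hneg
    rw [Matrix.mul_neg, Matrix.trace_neg, Complex.neg_re] at h
    have htr := trace_projNonneg_mul (hHerm γ₀)
    show trPos (ρ - (2:ℝ)^γ₀ • σ) ≤ 1 - ε
    rw [← htr]
    linarith
  -- every element of S is bounded below by DH(ε−η) + log η
  have hlb : ∀ γ ∈ S, DH (ε - η) ρ σ + Real.logb 2 η ≤ γ := by
    intro γ hγ
    have hγ' : trPos (ρ - (2:ℝ)^γ • σ) ≤ 1 - ε := hγ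
    have hT1lb : ∀ r ∈ T1, η / (2:ℝ)^γ ≤ r := by
      rintro r ⟨Q, hQ, hQ1, hQρ, rfl⟩
      have h1 := key_ub Q hQ hQ1 γ
      rw [div_le_iff₀ (h2γ γ)]
      nlinarith [h2γ γ]
    have hT1ne : T1.Nonempty := ⟨_, hone_mem (ε - η) (by linarith)⟩
    have hinf : η / (2:ℝ)^γ ≤ sInf T1 := le_csInf hT1ne hT1lb
    have hpos : 0 < η / (2:ℝ)^γ := div_pos hη0 (h2γ γ)
    have hlog : Real.logb 2 (η / (2:ℝ)^γ) ≤ Real.logb 2 (sInf T1) :=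
      Real.logb_le_logb_of_le one_lt_two hpos hinf
    have heq : Real.logb 2 (η / (2:ℝ)^γ) = Real.logb 2 η - γ := by
      rw [Real.logb_div (ne_of_gt hη0) (ne_of_gt (h2γ γ)),
        Real.logb_rpow two_pos (by norm_num)]
    rw [hDH1]
    linarith
  have hSbdd : BddBelow S := ⟨DH (ε - η) ρ σ + Real.logb 2 η, hlb⟩
  constructor
  · rw [hDhigh]
    exact le_csInf hSne hlb
  · by_contra hcon
    push_neg at hcon
    rw [hDhigh] at hcon
    set γ := DH ε ρ σ with hγdef
    have hγS : γ ∉ S := fun h => absurd (csInf_le hSbdd h) (not_le.mpr hcon)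
    have hγgt : 1 - ε < trPos (ρ - (2:ℝ)^γ • σ) := not_le.mp hγS
    set P := projNonneg (ρ - (2:ℝ)^γ • σ) with hPdef
    have hP := projNonneg_posSemidef (hHerm γ)
    have hP1 := one_sub_projNonneg_posSemidef (hHerm γ)
    have htr := trace_projNonneg_mul (hHerm γ)
    have hexp : (P * ρ).trace.re - (2:ℝ)^γ * (P * σ).trace.re
        = trPos (ρ - (2:ℝ)^γ • σ) := by
      rw [← htr, trace_mul_sub_re, trace_mul_smul_re]
    have hPσ0 : 0 ≤ (P * σ).trace.re := trace_mul_psd_nonneg hP hσ.posSemidef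
    have hPρ1 : (P * ρ).trace.re ≤ 1 := by
      have h := trace_mul_psd_nonneg hP1 hρ
      rw [Matrix.sub_mul, Matrix.trace_sub, Complex.sub_re, Matrix.one_mul] at h
      linarith [hρre]
    have hfeas : 1 - ε ≤ (P * ρ).trace.re := by
      nlinarith [mul_nonneg (h2γ γ).le hPσ0]
    have hmem : (P * σ).trace.re ∈ T2 := ⟨P, hP, hP1, hfeas, rfl⟩
    have hT2lb : ∀ r ∈ T2, c * (1 - ε) ≤ r := by
      rintro r ⟨Q, hQ, hQ1, hQρ, rfl⟩
      exact key_lb Q hQ hQ1 _ hQρ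
    have hT2ne : T2.Nonempty := ⟨_, hone_mem ε (by linarith)⟩
    have hT2bdd : BddBelow T2 := ⟨c * (1 - ε), hT2lb⟩
    have hinfle : sInf T2 ≤ (P * σ).trace.re := csInf_le hT2bdd hmem
    have hinfpos : 0 < sInf T2 :=
      lt_of_lt_of_le (mul_pos hc0 (by linarith)) (le_csInf hT2ne hT2lb)
    have hlt : sInf T2 * (2:ℝ)^γ < 1 := by
      have h2 : (2:ℝ)^γ * (P * σ).trace.re < ε := by linarith
      calc sInf T2 * (2:ℝ)^γ ≤ (P * σ).trace.re * (2:ℝ)^γ :=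
            mul_le_mul_of_nonneg_right hinfle (h2γ γ).le
        _ = (2:ℝ)^γ * (P * σ).trace.re := mul_comm _ _
        _ < ε := h2
        _ < 1 := hε1
    have hlt0 : 0 < sInf T2 * (2:ℝ)^γ := mul_pos hinfpos (h2γ γ)
    have hlog : Real.logb 2 (sInf T2 * (2:ℝ)^γ) < 0 := Real.logb_neg one_lt_two hlt0 hlt
    rw [Real.logb_mul (ne_of_gt hinfpos) (ne_of_gt (h2γ γ)),
      Real.logb_rpow two_pos (by norm_num)] at hlog
    have hfin : γ < - Real.logb 2 (sInf T2) := by linarith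
    rw [← hDH2] at hfin
    exact lt_irrefl γ hfin
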